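/- Let 0 < ℓ < ω and let B ⊆ 2^ℓ be a linearly independent set of vectors in the vector space (2^ℓ, +) over ℤ/2ℤ. If A ⊆ 2^ℓ has |A| ≥ 5 and A + A ⊆ B + B (where X + Y = {x + y : x ∈ X, y ∈ Y}), then there is a unique x ∈ 2^ℓ such that A + x ⊆ B. -/

import Mathlib

lemma aux_partner {ℓ : ℕ} {B : Set (Fin ℓ → ZMod 2)}
    (hB : LinearIndependent (ZMod 2) ((↑) : B → (Fin ℓ → ZMod 2)))
    {n : ℕ} (f : Fin n → (Fin ℓ → ZMod 2)) (hf : ∀ i, f i ∈ B)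
    (hsum : ∑ i, f i = 0) (i : Fin n) : ∃ j, j ≠ i ∧ f j = f i := by
  classical
  by_contra hcon
  push_neg at hcon
  set l : B →₀ ZMod 2 := ∑ k, Finsupp.single ⟨f k, hf k⟩ 1 with hl
  have htot : Finsupp.linearCombination (ZMod 2) ((↑) : B → (Fin ℓ → ZMod 2)) l = 0 := by
    rw [hl, map_sum]
    simpa [Finsupp.linearCombination_single] using hsum
  have hl0 : l = 0 := linearIndependent_iff.mp hB l htot
  have : l ⟨f i, hf i⟩ = 1 := by
    rw [hl, Finsupp.finset_sum_apply]
    rw [Finset.sum_eq_single i]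
    · simp
    · intro j _ hj
      rw [Finsupp.single_apply]
      have : f j ≠ f i := hcon j hj
      simp [Subtype.ext_iff, this]
    · simp
  rw [hl0] at this
  simp at this

section
variable {ℓ : ℕ} {B : Set (Fin ℓ → ZMod 2)}

lemma aux_self (x : Fin ℓ → ZMod 2) : x + x = 0 := by
  funext i
  have : ∀ a : ZMod 2, a + a = 0 := by decide
  exact this (x i)

lemma aux_cancel {x y : Fin ℓ → ZMod 2} (h : x + y = 0) : x = y := by
  have := congrArg (· + y) h
  simpa [add_assoc, aux_self] using this

lemma aux_four (hB : LinearIndependent (ZMod 2) ((↑) : B → (Fin ℓ → ZMod 2)))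
    {b1 b2 b3 b4 : Fin ℓ → ZMod 2} (h1 : b1 ∈ B) (h2 : b2 ∈ B) (h3 : b3 ∈ B) (h4 : b4 ∈ B)
    (hs : b1 + b2 + b3 + b4 = 0) :
    (b1 = b2 ∧ b3 = b4) ∨ (b1 = b3 ∧ b2 = b4) ∨ (b1 = b4 ∧ b2 = b3) := by
  have hf : ∀ i, (![b1, b2, b3, b4]) i ∈ B := by
    intro i; fin_cases i <;> assumption
  have hsum : ∑ i, (![b1, b2, b3, b4]) i = 0 := by
    simpa [Fin.sum_univ_four] using hs
  obtain ⟨j, hj, hje⟩ := aux_partner hB _ hf hsum 0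
  fin_cases j
  · exact absurd rfl hj
  · -- b2 = b1
    left
    have e : b1 = b2 := hje.symm
    refine ⟨e, aux_cancel ?_⟩
    have : b1 + b1 + b3 + b4 = 0 := by rw [e] at hs ⊢; exact hs
    simpa [aux_self] using this
  · right; left
    have e : b1 = b3 := hje.symm
    refine ⟨e, aux_cancel ?_⟩
    have : b1 + b2 + b1 + b4 = 0 := by rw [e] at hs ⊢; exact hs
    have h2' : b2 + b4 = 0 := by
      have := this
      rw [show b1 + b2 + b1 + b4 = (b1 + b1) + (b2 + b4) by abel] at this
      simpa [aux_self] using this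
    exact h2'
  · right; right
    have e : b1 = b4 := hje.symm
    refine ⟨e, aux_cancel ?_⟩
    have : b1 + b2 + b3 + b1 = 0 := by rw [e] at hs ⊢; exact hs
    rw [show b1 + b2 + b3 + b1 = (b1 + b1) + (b2 + b3) by abel] at this
    simpa [aux_self] using this

lemma aux_six (hB : LinearIndependent (ZMod 2) ((↑) : B → (Fin ℓ → ZMod 2)))
    {v1 v2 v3 v4 v5 v6 : Fin ℓ → ZMod 2}
    (h1 : v1 ∈ B) (h2 : v2 ∈ B) (h3 : v3 ∈ B) (h4 : v4 ∈ B) (h5 : v5 ∈ B) (h6 : v6 ∈ B)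
    (hs : v1 + v2 + v3 + v4 + v5 + v6 = 0)
    (h12 : v1 ≠ v2) (h34 : v3 ≠ v4) :
    v1 = v3 ∨ v1 = v4 ∨ v2 = v3 ∨ v2 = v4 := by
  by_contra hcon
  push_neg at hcon
  obtain ⟨e13, e14, e23, e24⟩ := hcon
  have hf : ∀ i, (![v1, v2, v3, v4, v5, v6]) i ∈ B := by
    intro i; fin_cases i <;> assumption
  have hsum : ∑ i, (![v1, v2, v3, v4, v5, v6]) i = 0 := by
    simpa [Fin.sum_univ_six] using hs
  -- partner of v1 must be v5 or v6
  have p1 : v1 = v5 ∨ v1 = v6 := by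
    obtain ⟨j, hj, hje⟩ := aux_partner hB _ hf hsum 0
    fin_cases j
    · exact absurd rfl hj
    · exact absurd hje.symm h12
    · exact absurd hje.symm e13
    · exact absurd hje.symm e14
    · exact Or.inl hje.symm
    · exact Or.inr hje.symm
  have p2 : v2 = v5 ∨ v2 = v6 := by
    obtain ⟨j, hj, hje⟩ := aux_partner hB _ hf hsum 1
    fin_cases j
    · exact absurd hje h12
    · exact absurd rfl hj
    · exact absurd hje.symm e23
    · exact absurd hje.symm e24
    · exact Or.inl hje.symm
    · exact Or.inr hje.symm
  have p3 : v3 = v5 ∨ v3 = v6 := by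
    obtain ⟨j, hj, hje⟩ := aux_partner hB _ hf hsum 2
    fin_cases j
    · exact absurd hje e13
    · exact absurd hje e23
    · exact absurd rfl hj
    · exact absurd hje.symm h34
    · exact Or.inl hje.symm
    · exact Or.inr hje.symm
  -- now v5, v6 ∈ {v1, v2} but also v3 ∈ {v5,v6}
  rcases p1 with e1 | e1 <;> rcases p2 with e2 | e2 <;> rcases p3 with e3 | e3 <;> simp_all
end

section
variable {ℓ : ℕ}

lemma aux_rot1 (u v : Fin ℓ → ZMod 2) : (u + v) + u = v := by
  rw [show (u + v) + u = (u + u) + v from by abel, aux_self, zero_add]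

lemma aux_rot2 (u v : Fin ℓ → ZMod 2) : (u + v) + v = u := by
  rw [show (u + v) + v = u + (v + v) from by abel, aux_self, add_zero]

lemma aux_move {x y z w : Fin ℓ → ZMod 2} (h : x + y = z + w) : x + z = y + w := by
  apply aux_cancel
  rw [show (x + z) + (y + w) = ((x + y) + z) + w from by abel, h,
    show ((z + w) + z) + w = (z + z) + (w + w) from by abel, aux_self, aux_self, add_zero]

end

open scoped Pointwise

theorem stmt0 (ℓ : ℕ) (hℓ : 0 < ℓ) (B A : Set (Fin ℓ → ZMod 2))
    (hB : LinearIndependent (ZMod 2) ((↑) : B → (Fin ℓ → ZMod 2)))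
    (hA : 5 ≤ A.ncard) (hAB : A + A ⊆ B + B) :
    ∃! x : Fin ℓ → ZMod 2, ∀ a ∈ A, a + x ∈ B := by
  classical
  have hfin : A.Finite := by
    by_contra h
    rw [Set.Infinite.ncard h] at hA; omega
  have hAne : A.Nonempty := by
    rcases A.eq_empty_or_nonempty with h | h
    · rw [h] at hA; simp at hA
    · exact h
  obtain ⟨a0, ha0⟩ := hAne
  set T := A \ {a0} with hT
  have hTsub : ∀ a ∈ T, a ∈ A := fun a h => h.1
  have hTne : ∀ a ∈ T, a ≠ a0 := fun a h => h.2
  have hTfin : T.Finite := hfin.diff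
  have hTcard : 4 ≤ T.ncard := by
    rw [hT, Set.ncard_diff_singleton_of_mem ha0]; omega
  have hdec : ∀ a ∈ A, ∀ a' ∈ A, ∃ b ∈ B, ∃ c ∈ B, b + c = a + a' := by
    intro a ha a' ha'
    have := hAB (Set.add_mem_add ha ha')
    rw [Set.mem_add] at this
    obtain ⟨p, hp, q, hq, h⟩ := this
    exact ⟨p, hp, q, hq, h⟩
  have hP : ∀ a : Fin ℓ → ZMod 2, ∃ p q : Fin ℓ → ZMod 2,
      (a ∈ T → p ∈ B ∧ q ∈ B ∧ p ≠ q ∧ p + q = a + a0) := by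
    intro a
    by_cases ha : a ∈ T
    · obtain ⟨p, hp, q, hq, h⟩ := hdec a (hTsub a ha) a0 ha0
      refine ⟨p, q, fun _ => ⟨hp, hq, ?_, h⟩⟩
      intro e
      apply hTne a ha
      apply aux_cancel
      rw [← h, e, aux_self]
    · exact ⟨0, 0, fun h => absurd h ha⟩
  choose b c hbc using hP
  -- pairs intersect
  have hint : ∀ a ∈ T, ∀ a' ∈ T, a ≠ a' →
      b a = b a' ∨ b a = c a' ∨ c a = b a' ∨ c a = c a' := by
    intro a ha a' ha' hne
    obtain ⟨hb1, hc1, hne1, hs1⟩ := hbc a ha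
    obtain ⟨hb2, hc2, hne2, hs2⟩ := hbc a' ha'
    obtain ⟨β, hβ, γ, hγ, hβγ⟩ := hdec a (hTsub a ha) a' (hTsub a' ha')
    have key : (a + a0) + ((a' + a0) + (a + a')) = 0 := by
      rw [show (a + a0) + ((a' + a0) + (a + a')) = (a + a) + ((a' + a') + (a0 + a0)) from by abel,
        aux_self, aux_self, aux_self, add_zero, add_zero]
    have hzero : b a + c a + b a' + c a' + β + γ = 0 := by
      rw [show b a + c a + b a' + c a' + β + γ
          = (b a + c a) + ((b a' + c a') + (β + γ)) from by abel, hs1, hs2, hβγ, key]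
    exact aux_six hB hb1 hc1 hb2 hc2 hβ hγ hzero hne1 hne2
  -- two distinct elements of a pair determine the index
  have hsumw : ∀ a ∈ T, ∀ w w' : Fin ℓ → ZMod 2, w ≠ w' →
      (w = b a ∨ w = c a) → (w' = b a ∨ w' = c a) → w + w' = a + a0 := by
    intro a ha w w' hne h1 h2
    obtain ⟨_, _, _, hs⟩ := hbc a ha
    rcases h1 with rfl | rfl <;> rcases h2 with rfl | rfl
    · exact absurd rfl hne
    · exact hs
    · rw [add_comm]; exact hs
    · exact absurd rfl hne
  have hsame : ∀ a ∈ T, ∀ a' ∈ T, ∀ w w' : Fin ℓ → ZMod 2, w ≠ w' →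
      (w = b a ∨ w = c a) → (w' = b a ∨ w' = c a) →
      (w = b a' ∨ w = c a') → (w' = b a' ∨ w' = c a') → a = a' := by
    intro a ha a' ha' w w' hne h1 h2 h3 h4
    have e1 := hsumw a ha w w' hne h1 h2
    have e2 := hsumw a' ha' w w' hne h3 h4
    exact add_right_cancel (e1.symm.trans e2)
  -- common element of all pairs
  have hex : ∃ w ∈ B, ∀ a ∈ T, w = b a ∨ w = c a := by
    obtain ⟨a1, ha1⟩ : T.Nonempty := by
      rw [← Set.ncard_pos hTfin]; omega
    by_cases H1 : ∀ a ∈ T, b a1 = b a ∨ b a1 = c a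
    · exact ⟨b a1, (hbc a1 ha1).1, H1⟩
    push_neg at H1
    obtain ⟨a2, ha2, H1b, H1c⟩ := H1
    by_cases H2 : ∀ a ∈ T, c a1 = b a ∨ c a1 = c a
    · exact ⟨c a1, (hbc a1 ha1).2.1, H2⟩
    push_neg at H2
    obtain ⟨a3, ha3, H2b, H2c⟩ := H2
    exfalso
    have h12 : a1 ≠ a2 := fun e => H1b (by rw [e])
    have h13 : a1 ≠ a3 := fun e => H2c (by rw [e])
    have hc1 : c a1 = b a2 ∨ c a1 = c a2 := by
      rcases hint a1 ha1 a2 ha2 h12 with h | h | h | h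
      exacts [absurd h H1b, absurd h H1c, Or.inl h, Or.inr h]
    have hb1 : b a1 = b a3 ∨ b a1 = c a3 := by
      rcases hint a1 ha1 a3 ha3 h13 with h | h | h | h
      exacts [Or.inl h, Or.inr h, absurd h H2b, absurd h H2c]
    have h23 : a2 ≠ a3 := by
      intro e
      rcases hb1 with h | h
      · exact H1b (by rw [h, e])
      · exact H1c (by rw [h, e])
    obtain ⟨z, hz2, hz3⟩ : ∃ z, (z = b a2 ∨ z = c a2) ∧ (z = b a3 ∨ z = c a3) := by
      rcases hint a2 ha2 a3 ha3 h23 with h | h | h | h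
      exacts [⟨b a2, Or.inl rfl, Or.inl h⟩, ⟨b a2, Or.inl rfl, Or.inr h⟩,
        ⟨c a2, Or.inr rfl, Or.inl h⟩, ⟨c a2, Or.inr rfl, Or.inr h⟩]
    have hzb : z ≠ b a1 := by
      intro e
      rcases hz2 with h | h
      · exact H1b (e.symm.trans h)
      · exact H1c (e.symm.trans h)
    have hzc : z ≠ c a1 := by
      intro e
      rcases hz3 with h | h
      · exact H2b (e.symm.trans h)
      · exact H2c (e.symm.trans h)
    -- P a2 = {c a1, z}, P a3 = {b a1, z}
    have hPa2 : ∀ u, (u = b a2 ∨ u = c a2) → u = c a1 ∨ u = z := by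
      intro u hu
      have hne2 := (hbc a2 ha2).2.2.1
      rcases hc1 with h | h <;> rcases hz2 with h' | h' <;> rcases hu with rfl | rfl
      · exact Or.inl h.symm
      · exact absurd (h.trans h'.symm).symm hzc
      · exact Or.inl h.symm
      · exact Or.inr h'.symm
      · exact Or.inr h'.symm
      · exact Or.inl h.symm
      · exact absurd (h.trans h'.symm).symm hzc
      · exact Or.inl h.symm
    have hPa3 : ∀ u, (u = b a3 ∨ u = c a3) → u = b a1 ∨ u = z := by
      intro u hu
      rcases hb1 with h | h <;> rcases hz3 with h' | h' <;> rcases hu with rfl | rfl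
      · exact Or.inl h.symm
      · exact absurd (h.trans h'.symm).symm hzb
      · exact Or.inl h.symm
      · exact Or.inr h'.symm
      · exact Or.inr h'.symm
      · exact Or.inl h.symm
      · exact absurd (h.trans h'.symm).symm hzb
      · exact Or.inl h.symm
    -- fourth element
    obtain ⟨a4, ha4, hnot⟩ : ∃ a4 ∈ T, a4 ∉ ({a1, a2, a3} : Set _) := by
      by_contra hcon
      push_neg at hcon
      have hsub : T ⊆ ({a1, a2, a3} : Set _) := hcon
      have h3fin : ({a1, a2, a3} : Set (Fin ℓ → ZMod 2)).Finite :=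
        (Set.finite_singleton a3).insert a2 |>.insert a1
      have hle := Set.ncard_le_ncard hsub h3fin
      have h3 : ({a1, a2, a3} : Set (Fin ℓ → ZMod 2)).ncard ≤ 3 := by
        calc ({a1, a2, a3} : Set (Fin ℓ → ZMod 2)).ncard
            ≤ ({a2, a3} : Set (Fin ℓ → ZMod 2)).ncard + 1 := Set.ncard_insert_le _ _
          _ ≤ (({a3} : Set (Fin ℓ → ZMod 2)).ncard + 1) + 1 := by
              have := Set.ncard_insert_le a2 ({a3} : Set (Fin ℓ → ZMod 2))
              omega
          _ ≤ 3 := by rw [Set.ncard_singleton]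
      omega
    simp only [Set.mem_insert_iff, Set.mem_singleton_iff, not_or] at hnot
    obtain ⟨h41, h42, h43⟩ := hnot
    have hne11 := (hbc a1 ha1).2.2.1
    have i1 := hint a4 ha4 a1 ha1 h41
    have hA1 : (b a1 = b a4 ∨ b a1 = c a4) ∨ (c a1 = b a4 ∨ c a1 = c a4) := by
      rcases i1 with h | h | h | h
      exacts [Or.inl (Or.inl h.symm), Or.inr (Or.inl h.symm),
        Or.inl (Or.inr h.symm), Or.inr (Or.inr h.symm)]
    obtain ⟨u2, hu2P, hu2⟩ : ∃ u, (u = b a4 ∨ u = c a4) ∧ (u = b a2 ∨ u = c a2) := by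
      rcases hint a4 ha4 a2 ha2 h42 with h | h | h | h
      exacts [⟨b a4, Or.inl rfl, Or.inl h⟩, ⟨b a4, Or.inl rfl, Or.inr h⟩,
        ⟨c a4, Or.inr rfl, Or.inl h⟩, ⟨c a4, Or.inr rfl, Or.inr h⟩]
    obtain ⟨u3, hu3P, hu3⟩ : ∃ u, (u = b a4 ∨ u = c a4) ∧ (u = b a3 ∨ u = c a3) := by
      rcases hint a4 ha4 a3 ha3 h43 with h | h | h | h
      exacts [⟨b a4, Or.inl rfl, Or.inl h⟩, ⟨b a4, Or.inl rfl, Or.inr h⟩,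
        ⟨c a4, Or.inr rfl, Or.inl h⟩, ⟨c a4, Or.inr rfl, Or.inr h⟩]
    rcases hA1 with hw | hw
    · -- b a1 ∈ P a4
      rcases hPa2 u2 hu2 with e2 | e2
      · -- c a1 ∈ P a4 too : a4 = a1
        exact h41 (hsame a4 ha4 a1 ha1 (b a1) (c a1) hne11 hw (e2 ▸ hu2P)
          (Or.inl rfl) (Or.inr rfl))
      · -- z ∈ P a4 : a4 = a3
        refine h43 (hsame a4 ha4 a3 ha3 (b a1) u2 ?_ hw hu2P hb1 ?_)
        · rw [e2]; exact Ne.symm hzb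
        · rw [e2]; exact hz3
    · -- c a1 ∈ P a4
      rcases hPa3 u3 hu3 with e3 | e3
      · exact h41 (hsame a4 ha4 a1 ha1 (b a1) (c a1) hne11 (e3 ▸ hu3P) hw
          (Or.inl rfl) (Or.inr rfl))
      · refine h42 (hsame a4 ha4 a2 ha2 (c a1) u3 ?_ hw hu3P hc1 ?_)
        · rw [e3]; exact Ne.symm hzc
        · rw [e3]; exact hz2
  obtain ⟨w, hwB, hw⟩ := hex
  -- existence
  have hxmem : ∀ a ∈ A, a + (a0 + w) ∈ B := by
    intro a ha
    by_cases hea : a = a0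
    · subst hea
      have : a + (a + w) = w := by
        rw [← add_assoc, aux_self, zero_add]
      rw [this]; exact hwB
    · have haT : a ∈ T := ⟨ha, hea⟩
      obtain ⟨hbB, hcB, _, hs⟩ := hbc a haT
      rcases hw a haT with e | e
      · have : a + (a0 + w) = c a := by
          rw [e, ← add_assoc, ← hs, aux_rot1]
        rw [this]; exact hcB
      · have : a + (a0 + w) = b a := by
          rw [e, ← add_assoc, ← hs, aux_rot2]
        rw [this]; exact hbB
  refine ⟨a0 + w, hxmem, ?_⟩
  -- uniqueness
  have huniq : ∀ x1 x2 : Fin ℓ → ZMod 2,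
      (∀ a ∈ A, a + x1 ∈ B) → (∀ a ∈ A, a + x2 ∈ B) → x1 = x2 := by
    intro x1 x2 h1 h2
    by_cases hxx : x1 = x2
    · exact hxx
    have pairlem : ∀ p ∈ A, ∀ q ∈ A, p ≠ q → x1 + x2 = p + q := by
      intro p hp q hq hpq
      have hz : (p + x1) + (q + x1) + (p + x2) + (q + x2) = 0 := by
        rw [show (p + x1) + (q + x1) + (p + x2) + (q + x2)
            = (p + p) + ((q + q) + ((x1 + x1) + (x2 + x2))) from by abel,
          aux_self, aux_self, aux_self, aux_self, add_zero, add_zero, add_zero]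
      rcases aux_four hB (h1 p hp) (h1 q hq) (h2 p hp) (h2 q hq) hz with
        ⟨e, _⟩ | ⟨e, _⟩ | ⟨e, _⟩
      · exact absurd (add_right_cancel e) hpq
      · exact absurd (add_left_cancel e) hxx
      · -- p + x1 = q + x2
        have := aux_move e
        -- p + q = x1 + x2
        exact this.symm
    obtain ⟨t1, ht1⟩ : T.Nonempty := by
      rw [← Set.ncard_pos hTfin]; omega
    obtain ⟨t2, ht2⟩ : (T \ {t1}).Nonempty := by
      rw [← Set.ncard_pos hTfin.diff, Set.ncard_diff_singleton_of_mem ht1]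
      omega
    have ht2T : t2 ∈ T := ht2.1
    have ht12 : t2 ≠ t1 := ht2.2
    have e1 := pairlem a0 ha0 t1 (hTsub t1 ht1) (Ne.symm (hTne t1 ht1))
    have e2 := pairlem a0 ha0 t2 (hTsub t2 ht2T) (Ne.symm (hTne t2 ht2T))
    exact absurd (add_left_cancel (e1.symm.trans e2)).symm ht12
  intro y hy
  exact huniq y (a0 + w) hy hxmem
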